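/- arXiv:1205.4131 — 3 statements merged into one kernel-verified Lean document; each statement's English description precedes it below -/
import Mathlib

section
/- Let F be a real 4×4 matrix that is antisymmetric with respect to the Minkowski metric η = diag(-1,1,1,1) (i.e. F_{ab} + F_{ba} = 0 where indices are lowered with η), and let F̃ be its Hodge dual defined by F̃_{cd} = (1/2) ε_{abcd} F^{ab}. Then F̃_{cd} F^{ce} = (1/4)(F^{ab} F̃_{ab}) δ^e_d. -/
set_option maxHeartbeats 2000000

open Matrix

/-- The Minkowski metric η = diag(-1,1,1,1). -/
noncomputable def eta : Matrix (Fin 4) (Fin 4) ℝ := Matrix.diagonal ![-1, 1, 1, 1]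

/-- The Levi-Civita symbol on four indices, with `lc 0 1 2 3 = 1`. -/
noncomputable def lc (a b c d : Fin 4) : ℝ :=
  (((a.val : ℝ) - b.val) * ((a.val : ℝ) - c.val) * ((a.val : ℝ) - d.val) *
    ((b.val : ℝ) - c.val) * ((b.val : ℝ) - d.val) * ((c.val : ℝ) - d.val)) / 12

/-- If `Fdn` (the matrix with both indices down) is antisymmetric, `Fup` is the matrix with
both indices raised by η, and `Ftilde` is the Hodge dual `F̃_{cd} = (1/2) ε_{abcd} F^{ab}`,
then `F̃_{cd} F^{ce} = (1/4)(F^{ab} F̃_{ab}) δ^e_d`. -/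
theorem stmt0 (Fdn : Matrix (Fin 4) (Fin 4) ℝ)
    (hF : ∀ a b, Fdn a b + Fdn b a = 0)
    (Fup Ftilde : Matrix (Fin 4) (Fin 4) ℝ)
    (hFup : ∀ a b, Fup a b = eta a a * eta b b * Fdn a b)
    (hFt : ∀ c d, Ftilde c d = (1/2) * ∑ a, ∑ b, lc a b c d * Fup a b) :
    ∀ d e, (∑ c, Ftilde c d * Fup c e)
      = (1/4) * (∑ a, ∑ b, Fup a b * Ftilde a b) * (if d = e then 1 else 0) := by
  set x01 := Fdn 0 1 with hx01
  set x02 := Fdn 0 2 with hx02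
  set x03 := Fdn 0 3 with hx03
  set x12 := Fdn 1 2 with hx12
  set x13 := Fdn 1 3 with hx13
  set x23 := Fdn 2 3 with hx23
  have hv0 : ((0:Fin 4):ℕ) = 0 := rfl
  have hv1 : ((1:Fin 4):ℕ) = 1 := rfl
  have hv2 : ((2:Fin 4):ℕ) = 2 := rfl
  have hv3 : ((3:Fin 4):ℕ) = 3 := rfl
  have hd0 : Fdn 0 0 = 0 := by linarith [hF 0 0]
  have hd1 : Fdn 1 1 = 0 := by linarith [hF 1 1]
  have hd2 : Fdn 2 2 = 0 := by linarith [hF 2 2]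
  have hd3 : Fdn 3 3 = 0 := by linarith [hF 3 3]
  have ha10 : Fdn 1 0 = -x01 := by rw [hx01]; linarith [hF 0 1]
  have ha20 : Fdn 2 0 = -x02 := by rw [hx02]; linarith [hF 0 2]
  have ha30 : Fdn 3 0 = -x03 := by rw [hx03]; linarith [hF 0 3]
  have ha21 : Fdn 2 1 = -x12 := by rw [hx12]; linarith [hF 1 2]
  have ha31 : Fdn 3 1 = -x13 := by rw [hx13]; linarith [hF 1 3]
  have ha32 : Fdn 3 2 = -x23 := by rw [hx23]; linarith [hF 2 3]
  have hu00 : Fup 0 0 = (0:ℝ) := by rw [hFup, hd0]; ring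
  have hu01 : Fup 0 1 = (-x01) := by rw [hFup, hx01]; norm_num [eta]
  have hu02 : Fup 0 2 = (-x02) := by rw [hFup, hx02]; simp [eta]
  have hu03 : Fup 0 3 = (-x03) := by rw [hFup, hx03]; simp [eta]
  have hu10 : Fup 1 0 = x01 := by rw [hFup, ha10]; norm_num [eta]
  have hu11 : Fup 1 1 = (0:ℝ) := by rw [hFup, hd1]; ring
  have hu12 : Fup 1 2 = x12 := by rw [hFup, hx12]; simp [eta]
  have hu13 : Fup 1 3 = x13 := by rw [hFup, hx13]; simp [eta]
  have hu20 : Fup 2 0 = x02 := by rw [hFup, ha20]; simp [eta]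
  have hu21 : Fup 2 1 = (-x12) := by rw [hFup, ha21]; simp [eta]
  have hu22 : Fup 2 2 = (0:ℝ) := by rw [hFup, hd2]; ring
  have hu23 : Fup 2 3 = x23 := by rw [hFup, hx23]; simp [eta]
  have hu30 : Fup 3 0 = x03 := by rw [hFup, ha30]; simp [eta]
  have hu31 : Fup 3 1 = (-x13) := by rw [hFup, ha31]; simp [eta]
  have hu32 : Fup 3 2 = (-x23) := by rw [hFup, ha32]; simp [eta]
  have hu33 : Fup 3 3 = (0:ℝ) := by rw [hFup, hd3]; ring
  have ht00 : Ftilde 0 0 = (0:ℝ) := by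
    rw [hFt]; rw [Fin.sum_univ_four]; simp only [Fin.sum_univ_four, hu00, hu01, hu02, hu03, hu10, hu11, hu12, hu13, hu20, hu21, hu22, hu23, hu30, hu31, hu32, hu33]; norm_num [lc, hv0, hv1, hv2, hv3] <;> ring
  have ht01 : Ftilde 0 1 = x23 := by
    rw [hFt]; rw [Fin.sum_univ_four]; simp only [Fin.sum_univ_four, hu00, hu01, hu02, hu03, hu10, hu11, hu12, hu13, hu20, hu21, hu22, hu23, hu30, hu31, hu32, hu33]; norm_num [lc, hv0, hv1, hv2, hv3] <;> ring
  have ht02 : Ftilde 0 2 = (-x13) := by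
    rw [hFt]; rw [Fin.sum_univ_four]; simp only [Fin.sum_univ_four, hu00, hu01, hu02, hu03, hu10, hu11, hu12, hu13, hu20, hu21, hu22, hu23, hu30, hu31, hu32, hu33]; norm_num [lc, hv0, hv1, hv2, hv3] <;> ring
  have ht03 : Ftilde 0 3 = x12 := by
    rw [hFt]; rw [Fin.sum_univ_four]; simp only [Fin.sum_univ_four, hu00, hu01, hu02, hu03, hu10, hu11, hu12, hu13, hu20, hu21, hu22, hu23, hu30, hu31, hu32, hu33]; norm_num [lc, hv0, hv1, hv2, hv3] <;> ring
  have ht10 : Ftilde 1 0 = (-x23) := by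
    rw [hFt]; rw [Fin.sum_univ_four]; simp only [Fin.sum_univ_four, hu00, hu01, hu02, hu03, hu10, hu11, hu12, hu13, hu20, hu21, hu22, hu23, hu30, hu31, hu32, hu33]; norm_num [lc, hv0, hv1, hv2, hv3] <;> ring
  have ht11 : Ftilde 1 1 = (0:ℝ) := by
    rw [hFt]; rw [Fin.sum_univ_four]; simp only [Fin.sum_univ_four, hu00, hu01, hu02, hu03, hu10, hu11, hu12, hu13, hu20, hu21, hu22, hu23, hu30, hu31, hu32, hu33]; norm_num [lc, hv0, hv1, hv2, hv3] <;> ring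
  have ht12 : Ftilde 1 2 = (-x03) := by
    rw [hFt]; rw [Fin.sum_univ_four]; simp only [Fin.sum_univ_four, hu00, hu01, hu02, hu03, hu10, hu11, hu12, hu13, hu20, hu21, hu22, hu23, hu30, hu31, hu32, hu33]; norm_num [lc, hv0, hv1, hv2, hv3] <;> ring
  have ht13 : Ftilde 1 3 = x02 := by
    rw [hFt]; rw [Fin.sum_univ_four]; simp only [Fin.sum_univ_four, hu00, hu01, hu02, hu03, hu10, hu11, hu12, hu13, hu20, hu21, hu22, hu23, hu30, hu31, hu32, hu33]; norm_num [lc, hv0, hv1, hv2, hv3] <;> ring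
  have ht20 : Ftilde 2 0 = x13 := by
    rw [hFt]; rw [Fin.sum_univ_four]; simp only [Fin.sum_univ_four, hu00, hu01, hu02, hu03, hu10, hu11, hu12, hu13, hu20, hu21, hu22, hu23, hu30, hu31, hu32, hu33]; norm_num [lc, hv0, hv1, hv2, hv3] <;> ring
  have ht21 : Ftilde 2 1 = x03 := by
    rw [hFt]; rw [Fin.sum_univ_four]; simp only [Fin.sum_univ_four, hu00, hu01, hu02, hu03, hu10, hu11, hu12, hu13, hu20, hu21, hu22, hu23, hu30, hu31, hu32, hu33]; norm_num [lc, hv0, hv1, hv2, hv3] <;> ring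
  have ht22 : Ftilde 2 2 = (0:ℝ) := by
    rw [hFt]; rw [Fin.sum_univ_four]; simp only [Fin.sum_univ_four, hu00, hu01, hu02, hu03, hu10, hu11, hu12, hu13, hu20, hu21, hu22, hu23, hu30, hu31, hu32, hu33]; norm_num [lc, hv0, hv1, hv2, hv3] <;> ring
  have ht23 : Ftilde 2 3 = (-x01) := by
    rw [hFt]; rw [Fin.sum_univ_four]; simp only [Fin.sum_univ_four, hu00, hu01, hu02, hu03, hu10, hu11, hu12, hu13, hu20, hu21, hu22, hu23, hu30, hu31, hu32, hu33]; norm_num [lc, hv0, hv1, hv2, hv3] <;> ring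
  have ht30 : Ftilde 3 0 = (-x12) := by
    rw [hFt]; rw [Fin.sum_univ_four]; simp only [Fin.sum_univ_four, hu00, hu01, hu02, hu03, hu10, hu11, hu12, hu13, hu20, hu21, hu22, hu23, hu30, hu31, hu32, hu33]; norm_num [lc, hv0, hv1, hv2, hv3] <;> ring
  have ht31 : Ftilde 3 1 = (-x02) := by
    rw [hFt]; rw [Fin.sum_univ_four]; simp only [Fin.sum_univ_four, hu00, hu01, hu02, hu03, hu10, hu11, hu12, hu13, hu20, hu21, hu22, hu23, hu30, hu31, hu32, hu33]; norm_num [lc, hv0, hv1, hv2, hv3] <;> ring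
  have ht32 : Ftilde 3 2 = x01 := by
    rw [hFt]; rw [Fin.sum_univ_four]; simp only [Fin.sum_univ_four, hu00, hu01, hu02, hu03, hu10, hu11, hu12, hu13, hu20, hu21, hu22, hu23, hu30, hu31, hu32, hu33]; norm_num [lc, hv0, hv1, hv2, hv3] <;> ring
  have ht33 : Ftilde 3 3 = (0:ℝ) := by
    rw [hFt]; rw [Fin.sum_univ_four]; simp only [Fin.sum_univ_four, hu00, hu01, hu02, hu03, hu10, hu11, hu12, hu13, hu20, hu21, hu22, hu23, hu30, hu31, hu32, hu33]; norm_num [lc, hv0, hv1, hv2, hv3] <;> ring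
  have hcases : ∀ (d : Fin 4), d = 0 ∨ d = 1 ∨ d = 2 ∨ d = 3 := by decide
  intro d e
  rcases hcases d with rfl | rfl | rfl | rfl <;> rcases hcases e with rfl | rfl | rfl | rfl <;>
    simp only [Fin.sum_univ_four, Fin.isValue, hu00, hu01, hu02, hu03, hu10, hu11, hu12, hu13, hu20, hu21, hu22, hu23, hu30, hu31, hu32, hu33, ht00, ht01, ht02, ht03, ht10, ht11, ht12, ht13, ht20, ht21, ht22, ht23, ht30, ht31, ht32, ht33, Fin.mk_zero, Fin.mk_one] <;> norm_num [Fin.ext_iff, hv0, hv1, hv2, hv3] <;> ring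
end

section
/- Let B(α) be the 4×4 matrix with rows (1+α²/2, -α²/2, -α, 0), (α²/2, 1-α²/2, -α, 0), (-α, α, 1, 0), (0,0,0,1), and let L(γ) be the boost matrix with upper-left 2×2 block [[cosh γ, -sinh γ], [-sinh γ, cosh γ]] and identity elsewhere. Then L(γ) · B(α) · L(γ)⁻¹ = B(α e^{-γ}) for all α, γ ∈ ℝ. -/
open Matrix

set_option maxHeartbeats 1600000

/-- Conjugating the Galileian boost B(α) by the boost L(γ) gives B(α e^{-γ}). -/
theorem stmt3 (α γ : ℝ) :
    let Bm : ℝ → Matrix (Fin 4) (Fin 4) ℝ := fun a =>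
      !![1 + a^2/2, -a^2/2, -a, 0;
         a^2/2, 1 - a^2/2, -a, 0;
         -a, a, 1, 0;
         0, 0, 0, 1]
    let L : ℝ → Matrix (Fin 4) (Fin 4) ℝ := fun g =>
      !![Real.cosh g, -Real.sinh g, 0, 0;
         -Real.sinh g, Real.cosh g, 0, 0;
         0, 0, 1, 0;
         0, 0, 0, 1]
    L γ * Bm α * (L γ)⁻¹ = Bm (α * Real.exp (-γ)) := by
  intro Bm L
  have hinv : (L γ)⁻¹ = L (-γ) := by
    apply inv_eq_right_inv
    ext i j
    fin_cases i <;> fin_cases j <;>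
      simp [L, Matrix.mul_apply, Fin.sum_univ_four, Real.cosh_neg, Real.sinh_neg,
        Matrix.one_apply, Matrix.vecHead, Matrix.vecTail] <;>
      nlinarith [Real.cosh_sq_sub_sinh_sq γ]
  rw [hinv]
  have hc : Real.cosh γ = (Real.exp γ + Real.exp (-γ)) / 2 := Real.cosh_eq γ
  have hs : Real.sinh γ = (Real.exp γ - Real.exp (-γ)) / 2 := Real.sinh_eq γ
  have he : Real.exp γ * Real.exp (-γ) = 1 := by
    rw [← Real.exp_add]; simp
  ext i j
  fin_cases i <;> fin_cases j <;>
    simp [Bm, L, Matrix.mul_apply, Fin.sum_univ_four, Real.cosh_neg, Real.sinh_neg,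
      hc, hs, Matrix.vecHead, Matrix.vecTail] <;>
    nlinarith [he, sq_nonneg α]
end

section
/- Let F ∈ so(1,3) and w ∈ ℝ⁴, and suppose I₂ := -(1/2) F̃_{cd} F^{cd} = 0, where F̃_{cd} = (1/2)ε_{abcd}F^{ab}. Define I₃(F,w) := η(F̃w, F̃w) = F̃_{ab}w^b F̃^a{}_c w^c. Then I₃ is invariant under translations: for every a ∈ ℝ⁴, I₃(F, w - Fa) = I₃(F, w). -/
open Matrix

/-- Hodge dual with both indices down: F̃_{cd} = (1/2) ε_{abcd} F^{ab}, where F is given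
with mixed indices (F^a_b) and F^{ab} = (F η)^{ab}. -/
noncomputable def dual (F : Matrix (Fin 4) (Fin 4) ℝ) : Matrix (Fin 4) (Fin 4) ℝ :=
  fun c d => (1/2) * ∑ a, ∑ b, lc a b c d * (F * eta) a b

/-- The invariant I₂ = -(1/2) F̃_{cd} F^{cd}. -/
noncomputable def I2inv (F : Matrix (Fin 4) (Fin 4) ℝ) : ℝ :=
  -(1/2) * ∑ c, ∑ d, dual F c d * (F * eta) c d

/-- The invariant I₃(F,w) = F̃_{ab} w^b F̃^a{}_c w^c = η(F̃w, F̃w). -/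
noncomputable def I3inv (F : Matrix (Fin 4) (Fin 4) ℝ) (w : Fin 4 → ℝ) : ℝ :=
  dotProduct ((dual F).mulVec w) ((eta * dual F).mulVec w)

set_option maxHeartbeats 4000000 in
private theorem dualF_mul_F (F : Matrix (Fin 4) (Fin 4) ℝ) (hF : Fᵀ * eta + eta * F = 0) (hI2 : I2inv F = 0) :
    dual F * F = 0 := by
  have h : ∀ i j, F j i * eta j j + eta i i * F i j = 0 := by
    intro i j
    have := congrFun (congrFun hF i) j
    simpa [Matrix.mul_apply, Matrix.add_apply, eta, Matrix.diagonal, Fin.sum_univ_four,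
      Matrix.transpose_apply] using this
  have e00 := h 0 0; have e11 := h 1 1; have e22 := h 2 2; have e33 := h 3 3
  have e01 := h 0 1; have e02 := h 0 2; have e03 := h 0 3
  have e12 := h 1 2; have e13 := h 1 3; have e23 := h 2 3
  simp only [eta, Matrix.diagonal_apply, Matrix.cons_val] at e00 e11 e22 e33 e01 e02 e03 e12 e13 e23
  norm_num at e00 e11 e22 e33 e01 e02 e03 e12 e13 e23
  have h00 : F 0 0 = 0 := by linarith
  have h11 : F 1 1 = 0 := by linarith
  have h22 : F 2 2 = 0 := by linarith
  have h33 : F 3 3 = 0 := by linarith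
  have h10 : F 1 0 = F 0 1 := by linarith
  have h20 : F 2 0 = F 0 2 := by linarith
  have h30 : F 3 0 = F 0 3 := by linarith
  have h21 : F 2 1 = -F 1 2 := by linarith
  have h31 : F 3 1 = -F 1 3 := by linarith
  have h32 : F 3 2 = -F 2 3 := by linarith
  simp only [I2inv, dual, lc, eta, Matrix.mul_apply, Matrix.diagonal_apply,
    Fin.sum_univ_four, Matrix.cons_val] at hI2
  norm_num [Fin.ext_iff, show ((3:Fin 4).val:ℕ) = 3 from rfl, show ((2:Fin 4).val:ℕ) = 2 from rfl,
    show ((1:Fin 4).val:ℕ) = 1 from rfl, show ((0:Fin 4).val:ℕ) = 0 from rfl] at hI2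
  simp only [h00, h11, h22, h33, h10, h20, h30, h21, h31, h32] at hI2
  ring_nf at hI2
  ext c e
  fin_cases c <;> fin_cases e <;>
    · simp only [dual, lc, eta, Matrix.mul_apply, Matrix.diagonal_apply, Matrix.zero_apply,
        Fin.sum_univ_four, Matrix.cons_val]
      norm_num [Fin.ext_iff, show ((3:Fin 4).val:ℕ) = 3 from rfl,
        show ((2:Fin 4).val:ℕ) = 2 from rfl, show ((1:Fin 4).val:ℕ) = 1 from rfl,
        show ((0:Fin 4).val:ℕ) = 0 from rfl]
      simp only [show (⟨0, by omega⟩ : Fin 4) = 0 from rfl, show (⟨1, by omega⟩ : Fin 4) = 1 from rfl,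
        show (⟨2, by omega⟩ : Fin 4) = 2 from rfl, show (⟨3, by omega⟩ : Fin 4) = 3 from rfl,
        h00, h11, h22, h33, h10, h20, h30, h21, h31, h32]
      ring_nf
      try linarith [hI2]

/-- If F ∈ so(1,3) with I₂ = 0, then I₃ is invariant under translations
w ↦ w - F a. -/
theorem stmt13 (F : Matrix (Fin 4) (Fin 4) ℝ) (w : Fin 4 → ℝ)
    (hF : Fᵀ * eta + eta * F = 0) (hI2 : I2inv F = 0) :
    ∀ a : Fin 4 → ℝ, I3inv F (w - F.mulVec a) = I3inv F w := by
  intro a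
  have hK : dual F * F = 0 := dualF_mul_F F hF hI2
  have h1 : (dual F).mulVec (F.mulVec a) = 0 := by
    rw [Matrix.mulVec_mulVec, hK, Matrix.zero_mulVec]
  have h2 : (eta * dual F).mulVec (F.mulVec a) = 0 := by
    rw [Matrix.mulVec_mulVec, mul_assoc, hK, mul_zero, Matrix.zero_mulVec]
  unfold I3inv
  rw [Matrix.mulVec_sub, Matrix.mulVec_sub, h1, h2, sub_zero, sub_zero]
end
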